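/- arXiv:2310.20705 — 2 statements merged into one kernel-verified Lean document; each statement's English description precedes it below -/
import Mathlib

section
/- If at every position the empirical symbol distribution of a set of strings is uniform over the alphabet, then both the total Shannon entropy Ent_S and the sum of pairwise Hamming distances are simultaneously maximized over all string sets of the same cardinality. -/
open Finset

/-- Sum over positions of the Shannon entropy of the empirical symbol distribution. -/
noncomputable def entS {α : Type*} [Fintype α] [DecidableEq α] {k L : ℕ}
    (P : Fin k → Fin L → α) : ℝ :=
  ∑ p : Fin L, ∑ e : α,
    Real.negMulLog (((Finset.univ.filter fun m => P m p = e).card : ℝ) / k)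

/-- Sum of pairwise Hamming distances of a family of strings. -/
def pairDistSum {α : Type*} [DecidableEq α] {k L : ℕ} (P : Fin k → Fin L → α) : ℕ :=
  ∑ i : Fin k, ∑ j ∈ Finset.univ.filter (fun j => i < j), hammingDist (P i) (P j)

private lemma ent_le_log_card {α : Type*} [Fintype α] (q : α → ℝ) (h0 : ∀ e, 0 ≤ q e)
    (h1 : ∑ e, q e = 1) :
    ∑ e, Real.negMulLog (q e) ≤ Real.log (Fintype.card α) := by
  have hne : Nonempty α := by
    by_contra h
    rw [not_nonempty_iff] at h
    simp [Finset.univ_eq_empty] at h1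
  have hA : (0:ℝ) < (Fintype.card α : ℝ) := by
    exact_mod_cast Fintype.card_pos
  set A : ℝ := (Fintype.card α : ℝ)
  have key := Real.concaveOn_negMulLog.le_map_sum (t := (univ : Finset α))
    (w := fun _ => A⁻¹) (p := q) (fun e _ => by positivity)
    (by simp [A]) (fun e _ => Set.mem_Ici.2 (h0 e))
  have hsum : ∑ e, A⁻¹ • q e = A⁻¹ := by
    rw [← Finset.smul_sum, h1, smul_eq_mul, mul_one]
  rw [hsum] at key
  have hneg : Real.negMulLog A⁻¹ = A⁻¹ * Real.log A := by
    rw [Real.negMulLog, Real.log_inv]; ring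
  rw [hneg] at key
  have := mul_le_mul_of_nonneg_left key (le_of_lt hA)
  calc ∑ e, Real.negMulLog (q e) = A * ∑ e, A⁻¹ • (Real.negMulLog (q e)) := by
        rw [← Finset.smul_sum, smul_eq_mul, ← mul_assoc, mul_inv_cancel₀ (ne_of_gt hA), one_mul]
    _ ≤ A * (A⁻¹ * Real.log A) := this
    _ = Real.log A := by field_simp

private lemma double_count {k : ℕ} (f : Fin k → Fin k → ℕ)
    (hsymm : ∀ i j, f i j = f j i) (hdiag : ∀ i, f i i = 0) :
    ∑ i, ∑ j, f i j = 2 * ∑ i, ∑ j ∈ Finset.univ.filter (fun j => i < j), f i j := by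
  have split : ∀ i, ∑ j, f i j =
      (∑ j ∈ Finset.univ.filter (fun j => i < j), f i j) +
      ∑ j ∈ Finset.univ.filter (fun j => j < i), f i j := by
    intro i
    rw [← Finset.sum_filter_add_sum_filter_not univ (fun j => i < j)]
    congr 1
    rw [Finset.sum_filter, Finset.sum_filter]
    apply Finset.sum_congr rfl
    intro j _
    rcases eq_or_ne j i with rfl | hne
    · simp [hdiag]
    · have h' : (¬ i < j) ↔ j < i := by
        rw [not_lt]
        exact ⟨fun h => lt_of_le_of_ne h hne, le_of_lt⟩
      simp only [h']
  have swap : ∑ i, ∑ j ∈ Finset.univ.filter (fun j => j < i), f i j =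
      ∑ i, ∑ j ∈ Finset.univ.filter (fun j => i < j), f i j := by
    rw [Finset.sum_comm' (t' := (univ : Finset (Fin k)))
      (s' := fun y => Finset.univ.filter (fun i => y < i)) (by simp)]
    exact Finset.sum_congr rfl fun y _ => Finset.sum_congr rfl fun x _ => hsymm x y
  calc ∑ i, ∑ j, f i j
      = ∑ i, ((∑ j ∈ Finset.univ.filter (fun j => i < j), f i j) +
          ∑ j ∈ Finset.univ.filter (fun j => j < i), f i j) :=
        Finset.sum_congr rfl fun i _ => split i
    _ = 2 * ∑ i, ∑ j ∈ Finset.univ.filter (fun j => i < j), f i j := by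
        rw [Finset.sum_add_distrib, swap]; ring

/-- column counts -/
private def colCt {α : Type*} [Fintype α] [DecidableEq α] {k L : ℕ}
    (Q : Fin k → Fin L → α) (p : Fin L) (e : α) : ℕ :=
  (Finset.univ.filter fun m => Q m p = e).card

private lemma colCt_sum {α : Type*} [Fintype α] [DecidableEq α] {k L : ℕ}
    (Q : Fin k → Fin L → α) (p : Fin L) : ∑ e, colCt Q p e = k := by
  simp only [colCt]
  rw [← Finset.card_eq_sum_card_fiberwise (f := fun m => Q m p) (t := univ)
    (fun x _ => mem_univ _)]
  simp

private lemma sum_ite_eq_sq {α : Type*} [Fintype α] [DecidableEq α] {k L : ℕ}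
    (Q : Fin k → Fin L → α) (p : Fin L) :
    ∑ i : Fin k, ∑ j : Fin k, (if Q i p = Q j p then 1 else 0 : ℕ) =
      ∑ e, (colCt Q p e) ^ 2 := by
  have h1 : ∀ i : Fin k, ∑ j : Fin k, (if Q i p = Q j p then 1 else 0 : ℕ) =
      colCt Q p (Q i p) := by
    intro i
    rw [colCt, Finset.card_filter]
    exact Finset.sum_congr rfl fun j _ => by by_cases h : Q i p = Q j p <;> simp [eq_comm, h]
  calc ∑ i : Fin k, ∑ j : Fin k, (if Q i p = Q j p then 1 else 0 : ℕ)
      = ∑ i : Fin k, colCt Q p (Q i p) := Finset.sum_congr rfl fun i _ => h1 i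
    _ = ∑ e, ∑ i ∈ Finset.univ.filter (fun i => Q i p = e), colCt Q p (Q i p) := by
        rw [Finset.sum_fiberwise]
    _ = ∑ e, (colCt Q p e) ^ 2 := by
        refine Finset.sum_congr rfl fun e _ => ?_
        rw [Finset.sum_congr rfl (fun i hi => by
          rw [(Finset.mem_filter.1 hi).2]), Finset.sum_const, ← colCt, smul_eq_mul, sq]

/-- the key counting identity -/
private lemma key_identity {α : Type*} [Fintype α] [DecidableEq α] {k L : ℕ}
    (Q : Fin k → Fin L → α) :
    2 * pairDistSum Q + ∑ p : Fin L, ∑ e, (colCt Q p e) ^ 2 = L * k ^ 2 := by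
  have hham : ∀ i j : Fin k, hammingDist (Q i) (Q j) =
      ∑ p : Fin L, (if Q i p ≠ Q j p then 1 else 0 : ℕ) := by
    intro i j
    rw [hammingDist, Finset.card_filter]
  have hswap : pairDistSum Q =
      ∑ p : Fin L, ∑ i : Fin k, ∑ j ∈ Finset.univ.filter (fun j => i < j),
        (if Q i p ≠ Q j p then 1 else 0 : ℕ) := by
    rw [pairDistSum]
    rw [show (∑ i : Fin k, ∑ j ∈ Finset.univ.filter (fun j => i < j),
        hammingDist (Q i) (Q j)) = ∑ i : Fin k, ∑ p : Fin L,
        ∑ j ∈ Finset.univ.filter (fun j => i < j),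
        (if Q i p ≠ Q j p then 1 else 0 : ℕ) from
      Finset.sum_congr rfl fun i _ => by
        rw [Finset.sum_comm]
        exact Finset.sum_congr rfl fun j _ => hham i j]
    exact Finset.sum_comm
  have keyp : ∀ p : Fin L,
      2 * (∑ i : Fin k, ∑ j ∈ Finset.univ.filter (fun j => i < j),
        (if Q i p ≠ Q j p then 1 else 0 : ℕ)) + ∑ e, (colCt Q p e) ^ 2 = k ^ 2 := by
    intro p
    have hone : ∀ (i j : Fin k), ((if Q i p ≠ Q j p then 1 else 0) +
        (if Q i p = Q j p then 1 else 0) : ℕ) = 1 := fun i j => by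
      by_cases h : Q i p = Q j p <;> simp [h]
    have e1 : (∑ i : Fin k, ∑ j : Fin k, ((if Q i p ≠ Q j p then 1 else 0) +
        (if Q i p = Q j p then 1 else 0) : ℕ)) = k ^ 2 := by
      simp only [hone]; simp [sq]
    calc 2 * (∑ i : Fin k, ∑ j ∈ Finset.univ.filter (fun j => i < j),
          (if Q i p ≠ Q j p then 1 else 0 : ℕ)) + ∑ e, (colCt Q p e) ^ 2
        = (∑ i : Fin k, ∑ j : Fin k, (if Q i p ≠ Q j p then 1 else 0 : ℕ)) +
          ∑ i : Fin k, ∑ j : Fin k, (if Q i p = Q j p then 1 else 0 : ℕ) := by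
          rw [← double_count _ (fun i j => by
              by_cases h : Q i p = Q j p <;> simp [eq_comm, h]) (fun i => by simp),
            ← sum_ite_eq_sq Q p]
      _ = k ^ 2 := by rw [← e1]; simp [Finset.sum_add_distrib]
  rw [hswap, Finset.mul_sum, ← Finset.sum_add_distrib,
    Finset.sum_congr rfl fun p _ => keyp p]
  simp [mul_comm]

/-- If at every position the empirical symbol distribution is uniform (every symbol occurs
`k / A` times, `A = |Σ|`, `A ∣ k`), then `Ent_S(P) = L log A` and
`D(P) = L k² (A−1) / (2A)`, and these are the maximal possible values of `Ent_S` and `D`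
among all families of `k` strings. -/
theorem uniform_columns_maximize_entropy_and_distance {α : Type*} [Fintype α]
    [DecidableEq α] {k L A : ℕ} (hA : A = Fintype.card α) (hk : 0 < k) (hdvd : A ∣ k)
    (P : Fin k → Fin L → α)
    (hunif : ∀ p e, (Finset.univ.filter fun m => P m p = e).card = k / A) :
    entS P = (L : ℝ) * Real.log A ∧
    (pairDistSum P : ℝ) = (L : ℝ) * (k : ℝ) ^ 2 * ((A : ℝ) - 1) / (2 * A) ∧
    (∀ Q : Fin k → Fin L → α, entS Q ≤ entS P ∧ pairDistSum Q ≤ pairDistSum P) := by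
  obtain ⟨m, hm⟩ := hdvd
  have hA0 : 0 < A := by
    rcases Nat.eq_zero_or_pos A with h | h
    · rw [h, zero_mul] at hm; omega
    · exact h
  have hm0 : 0 < m := by
    rcases Nat.eq_zero_or_pos m with h | h
    · rw [h, mul_zero] at hm; omega
    · exact h
  have hkA : k / A = m := by rw [hm, Nat.mul_div_cancel_left m hA0]
  have hkR : (k : ℝ) = (A : ℝ) * m := by exact_mod_cast hm
  have hAR : (0:ℝ) < (A:ℝ) := by exact_mod_cast hA0
  have hkR0 : (0:ℝ) < (k:ℝ) := by exact_mod_cast hk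
  have hmR : (0:ℝ) < (m:ℝ) := by exact_mod_cast hm0
  -- the value of m/k
  have hfrac : (m : ℝ) / k = (A : ℝ)⁻¹ := by
    rw [hkR]; field_simp
  -- entropy value of P
  have hcol : ∀ p e, colCt P p e = m := by
    intro p e; rw [colCt, hunif p e, hkA]
  have hentP : entS P = (L : ℝ) * Real.log A := by
    rw [entS]
    have hinner : ∀ p : Fin L, (∑ e : α,
        Real.negMulLog (((Finset.univ.filter fun m' => P m' p = e).card : ℝ) / k))
        = Real.log A := by
      intro p
      have : ∀ e : α, Real.negMulLog
          (((Finset.univ.filter fun m' => P m' p = e).card : ℝ) / k)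
          = (A : ℝ)⁻¹ * Real.log A := by
        intro e
        rw [hunif p e, hkA, hfrac, Real.negMulLog, Real.log_inv]; ring
      rw [Finset.sum_congr rfl fun e _ => this e, Finset.sum_const,
        Finset.card_univ, ← hA, nsmul_eq_mul]
      field_simp
    rw [Finset.sum_congr rfl fun p _ => hinner p, Finset.sum_const]
    simp [nsmul_eq_mul]
  -- key identities
  have keyP := key_identity P
  have hSP : ∑ p : Fin L, ∑ e, (colCt P p e) ^ 2 = L * (A * m ^ 2) := by
    simp [hcol, ← hA, Finset.sum_const, mul_comm]
  rw [hSP] at keyP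
  -- the real value of pairDistSum P
  have hdistP : (pairDistSum P : ℝ) = (L : ℝ) * (k : ℝ) ^ 2 * ((A : ℝ) - 1) / (2 * A) := by
    have h2 : 2 * (pairDistSum P : ℝ) + (L : ℝ) * ((A:ℝ) * (m:ℝ) ^ 2)
        = (L : ℝ) * (k:ℝ) ^ 2 := by exact_mod_cast keyP
    rw [eq_div_iff (by positivity : (2 * (A:ℝ)) ≠ 0)]
    linear_combination (A:ℝ) * h2 + (L:ℝ) * ((k:ℝ) + (A:ℝ) * (m:ℝ)) * hkR
  refine ⟨hentP, hdistP, fun Q => ⟨?_, ?_⟩⟩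
  · -- entropy maximality
    rw [hentP, entS]
    have hbound : ∀ p : Fin L, (∑ e : α,
        Real.negMulLog (((Finset.univ.filter fun m' => Q m' p = e).card : ℝ) / k))
        ≤ Real.log A := by
      intro p
      have := ent_le_log_card (fun e => ((Finset.univ.filter fun m' => Q m' p = e).card : ℝ) / k)
        (fun e => by positivity)
        (by
          rw [← Finset.sum_div]
          have : ∑ e : α, ((Finset.univ.filter fun m' => Q m' p = e).card : ℝ) = k := by
            exact_mod_cast colCt_sum Q p
          rw [this, div_self (ne_of_gt hkR0)])
      rwa [← hA] at this
    calc ∑ p : Fin L, (∑ e : α,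
          Real.negMulLog (((Finset.univ.filter fun m' => Q m' p = e).card : ℝ) / k))
        ≤ ∑ _p : Fin L, Real.log A := Finset.sum_le_sum fun p _ => hbound p
      _ = (L : ℝ) * Real.log A := by simp [Finset.sum_const, nsmul_eq_mul]
  · -- distance maximality
    have keyQ := key_identity Q
    have hSQ : L * (A * m ^ 2) ≤ ∑ p : Fin L, ∑ e, (colCt Q p e) ^ 2 := by
      have hp : ∀ p : Fin L, A * m ^ 2 ≤ ∑ e, (colCt Q p e) ^ 2 := by
        intro p
        have hcs := sq_sum_le_card_mul_sum_sq (s := (univ : Finset α)) (f := colCt Q p)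
        rw [colCt_sum Q p, Finset.card_univ, ← hA] at hcs
        have hk2 : k ^ 2 = A * (A * m ^ 2) := by rw [hm]; ring
        rw [hk2] at hcs
        exact Nat.le_of_mul_le_mul_left hcs hA0
      calc L * (A * m ^ 2) = ∑ _p : Fin L, A * m ^ 2 := by simp [Finset.sum_const]
        _ ≤ _ := Finset.sum_le_sum fun p _ => hp p
    omega
end

section
/- If the empirical distribution at some position is not uniform and the alphabet has at least 2 symbols with k large enough, then there exists a single-symbol modification of one string (changing its symbol at that position from a most frequent to a least frequent symbol) that strictly increases both the pairwise Hamming distance sum and the position entropy contribution, provided the most frequent count exceeds the least frequent count by at least 2. -/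
open Finset

lemma ham_update_eq {α : Type*} [DecidableEq α] {L : ℕ} (x y : Fin L → α) (p : Fin L) (a : α) :
    (hammingDist (Function.update x p a) y : ℤ) - hammingDist x y
      = (if a ≠ y p then 1 else 0) - (if x p ≠ y p then 1 else 0) := by
  have key : ∀ z : Fin L → α,
      (hammingDist z y : ℤ) = (((univ.erase p).filter fun q => z q ≠ y q).card : ℤ)
        + (if z p ≠ y p then 1 else 0) := by
    intro z
    have huniv : (univ : Finset (Fin L)) = insert p (univ.erase p) :=
      (Finset.insert_erase (mem_univ p)).symm
    have hfz : (univ.filter fun q => z q ≠ y q)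
        = ((insert p (univ.erase p)).filter fun q => z q ≠ y q) := by
      rw [Finset.insert_erase (mem_univ p)]
    rw [hammingDist, show ({i | z i ≠ y i} : Finset (Fin L)) = univ.filter fun q => z q ≠ y q
        from rfl, hfz, Finset.filter_insert]
    by_cases h : z p ≠ y p
    · rw [if_pos h, if_pos h, Finset.card_insert_of_notMem (by simp)]
      push_cast; ring
    · rw [if_neg h, if_neg h]; push_cast; ring
  rw [key (Function.update x p a), key x, Function.update_self]
  have : ((univ.erase p).filter fun q => Function.update x p a q ≠ y q)
      = ((univ.erase p).filter fun q => x q ≠ y q) := by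
    apply Finset.filter_congr
    intro q hq
    rw [Function.update_of_ne (Finset.mem_erase.mp hq).1]
  rw [this]; ring

lemma negMulLog_step {a b d : ℝ} (ha : 0 ≤ a) (hd : 0 < d) (hab : a + 2*d ≤ b) :
    Real.negMulLog a + Real.negMulLog b
      < Real.negMulLog (a + d) + Real.negMulLog (b - d) := by
  have hba : 0 < b - a := by linarith
  set l := d / (b - a) with hldef
  have hl0 : 0 < l := div_pos hd hba
  have hl1 : l < 1 := by rw [hldef, div_lt_one hba]; linarith
  have hld : l * (b - a) = d := div_mul_cancel₀ d hba.ne'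
  have hmem_a : a ∈ Set.Ici (0:ℝ) := ha
  have hmem_b : b ∈ Set.Ici (0:ℝ) := by simp only [Set.mem_Ici]; linarith
  have hne : a ≠ b := by intro h; rw [h] at hab; linarith
  have h1 := Real.strictConcaveOn_negMulLog.2 hmem_a hmem_b hne
    (by linarith : (0:ℝ) < 1 - l) hl0 (by ring)
  have h2 := Real.strictConcaveOn_negMulLog.2 hmem_a hmem_b hne hl0
    (by linarith : (0:ℝ) < 1 - l) (by ring)
  simp only [smul_eq_mul] at h1 h2
  have e1 : (1 - l) * a + l * b = a + d := by linear_combination hld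
  have e2 : l * a + (1 - l) * b = b - d := by linear_combination -hld
  rw [e1] at h1; rw [e2] at h2
  linarith

/-- If at position `p` the most frequent symbol `e⁺` exceeds the least frequent symbol
`e⁻` by at least 2 in count, then changing one string's symbol at `p` from `e⁺` to `e⁻`
strictly increases both the pairwise Hamming distance sum and the total Shannon entropy. -/
theorem single_symbol_change_increases_distance_and_entropy {α : Type*} [Fintype α]
    [DecidableEq α] {k L : ℕ} (P : Fin k → Fin L → α) (p : Fin L) (c : α → ℕ)
    (hc : ∀ e, c e = (Finset.univ.filter fun m => P m p = e).card)
    (eplus eminus : α) (hmax : ∀ e, c e ≤ c eplus) (hmin : ∀ e, c eminus ≤ c e)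
    (hgap : c eminus + 2 ≤ c eplus) :
    ∃ m₀ : Fin k, P m₀ p = eplus ∧
      pairDistSum P
        < pairDistSum (Function.update P m₀ (Function.update (P m₀) p eminus)) ∧
      entS P < entS (Function.update P m₀ (Function.update (P m₀) p eminus)) := by
  classical
  have hne : eplus ≠ eminus := by
    intro h; rw [h] at hgap; omega
  have hck : c eplus ≤ k := by
    rw [hc]
    calc (univ.filter fun m => P m p = eplus).card ≤ (univ : Finset (Fin k)).card :=
          Finset.card_filter_le _ _
      _ = k := by simp
  have hpos : 0 < (univ.filter fun m => P m p = eplus).card := by rw [← hc]; omega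
  obtain ⟨m₀, hm₀mem⟩ := Finset.card_pos.mp hpos
  have hm₀ : P m₀ p = eplus := (Finset.mem_filter.mp hm₀mem).2
  set P' := Function.update P m₀ (Function.update (P m₀) p eminus) with hP'def
  have hP'ne : ∀ m, m ≠ m₀ → P' m = P m := fun m h => Function.update_of_ne h _ _
  have hP'm₀ : P' m₀ = Function.update (P m₀) p eminus := Function.update_self _ _ _
  have hP'q : ∀ m q, q ≠ p → P' m q = P m q := by
    intro m q hq
    by_cases hm : m = m₀
    · subst hm; rw [hP'm₀, Function.update_of_ne hq]
    · rw [hP'ne m hm]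
  have hP'p : P' m₀ p = eminus := by rw [hP'm₀, Function.update_self]
  refine ⟨m₀, hm₀, ?_, ?_⟩
  · -- distance goal
    have hδ : ∀ j, j ≠ m₀ →
        (hammingDist (P' m₀) (P' j) : ℤ) - hammingDist (P m₀) (P j)
          = (if eminus ≠ P j p then 1 else 0) - (if eplus ≠ P j p then 1 else 0) := by
      intro j hj
      rw [hP'ne j hj, hP'm₀, ham_update_eq (P m₀) (P j) p eminus, hm₀]
    set δ : Fin k → ℤ :=
      fun j => (if eminus ≠ P j p then 1 else 0) - (if eplus ≠ P j p then 1 else 0) with hδdef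
    have hcount : ∀ e : α, ∑ j : Fin k, (if e ≠ P j p then (1:ℤ) else 0) = (k : ℤ) - c e := by
      intro e
      have h1 : ∑ j : Fin k, (if e ≠ P j p then (1:ℤ) else 0)
          = ((univ.filter fun j => e ≠ P j p).card : ℤ) := by
        rw [Finset.sum_boole]
      have h2 : (univ.filter fun j => ¬ (e ≠ P j p)) = (univ.filter fun j => P j p = e) := by
        apply Finset.filter_congr; intro j _; simp [eq_comm]
      have h3 := Finset.card_filter_add_card_filter_not
        (s := (univ : Finset (Fin k))) (fun j => e ≠ P j p)
      rw [h2] at h3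
      have h4 : ((univ : Finset (Fin k)).card) = k := by simp
      rw [h1, hc e]
      omega
    have hδsum : ∑ j : Fin k, δ j = (c eplus : ℤ) - c eminus := by
      simp only [hδdef]
      rw [Finset.sum_sub_distrib, hcount eminus, hcount eplus]
      ring
    have hδm₀ : δ m₀ = 1 := by
      simp only [hδdef, hm₀]
      rw [if_pos (Ne.symm hne), if_neg (by simp)]
      norm_num
    have hsplit : (pairDistSum P' : ℤ) - pairDistSum P = ∑ j ∈ univ.erase m₀, δ j := by
      have step1 : (pairDistSum P' : ℤ) - pairDistSum P
          = ∑ i : Fin k, ∑ j ∈ univ.filter (fun j => i < j),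
              ((hammingDist (P' i) (P' j) : ℤ) - hammingDist (P i) (P j)) := by
        unfold pairDistSum
        push_cast
        rw [← Finset.sum_sub_distrib]
        exact Finset.sum_congr rfl fun i _ => by rw [← Finset.sum_sub_distrib]
      rw [step1, ← Finset.add_sum_erase _ _ (mem_univ m₀)]
      have hfirst : ∑ j ∈ univ.filter (fun j => m₀ < j),
          ((hammingDist (P' m₀) (P' j) : ℤ) - hammingDist (P m₀) (P j))
            = ∑ j ∈ univ.filter (fun j => m₀ < j), δ j := by
        apply Finset.sum_congr rfl
        intro j hj
        exact hδ j (Finset.mem_filter.mp hj).2.ne'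
      have hrest : ∀ i ∈ univ.erase m₀,
          ∑ j ∈ univ.filter (fun j => i < j),
            ((hammingDist (P' i) (P' j) : ℤ) - hammingDist (P i) (P j))
          = if i < m₀ then δ i else 0 := by
        intro i hi
        have hi' : i ≠ m₀ := (Finset.mem_erase.mp hi).1
        by_cases h : i < m₀
        · rw [if_pos h]
          have hz : ∀ j ∈ univ.filter (fun j => i < j), j ≠ m₀ →
              ((hammingDist (P' i) (P' j) : ℤ) - hammingDist (P i) (P j)) = 0 := by
            intro j _ hjne
            rw [hP'ne i hi', hP'ne j hjne]; ring
          rw [Finset.sum_eq_single_of_mem m₀ (Finset.mem_filter.mpr ⟨mem_univ _, h⟩) hz]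
          rw [hP'ne i hi', hammingDist_comm (P i) (P' m₀), hammingDist_comm (P i) (P m₀)]
          have h := hδ i hi'
          rw [hP'ne i hi'] at h
          exact h
        · rw [if_neg h]
          apply Finset.sum_eq_zero
          intro j hj
          have hjm : j ≠ m₀ := by
            intro hjeq; exact h (hjeq ▸ (Finset.mem_filter.mp hj).2)
          rw [hP'ne i hi', hP'ne j hjm]; ring
      rw [Finset.sum_congr rfl hrest, hfirst]
      have hmerge : ∑ j ∈ univ.erase m₀, δ j
          = ∑ j ∈ univ.filter (fun j => m₀ < j), δ j
            + ∑ i ∈ univ.erase m₀, (if i < m₀ then δ i else 0) := by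
        rw [← Finset.sum_filter_add_sum_filter_not (univ.erase m₀) (fun j => m₀ < j)]
        congr 1
        · apply Finset.sum_congr _ (fun _ _ => rfl)
          ext j
          simp only [Finset.mem_filter, Finset.mem_erase, mem_univ, true_and, and_true]
          exact ⟨fun h => h.2, fun h => ⟨h.ne', h⟩⟩
        · rw [Finset.sum_filter]
          apply Finset.sum_congr rfl
          intro j hj
          have hj2 : j ≠ m₀ := (Finset.mem_erase.mp hj).1
          by_cases hjlt : j < m₀
          · rw [if_pos (not_lt.mpr hjlt.le), if_pos hjlt]
          · have hgt : m₀ < j := lt_of_le_of_ne (not_lt.mp hjlt) hj2.symm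
            rw [if_neg (not_not_intro hgt), if_neg hjlt]
      rw [hmerge]
    have hval : ∑ j ∈ univ.erase m₀, δ j = (c eplus : ℤ) - c eminus - 1 := by
      have h := Finset.add_sum_erase univ δ (mem_univ m₀)
      rw [hδm₀, hδsum] at h
      linarith
    have : (pairDistSum P : ℤ) < pairDistSum P' := by
      have : (0:ℤ) < (pairDistSum P' : ℤ) - pairDistSum P := by
        rw [hsplit, hval]
        have : (c eminus : ℤ) + 2 ≤ (c eplus : ℤ) := by exact_mod_cast hgap
        linarith
      linarith
    exact_mod_cast this
  · -- entropy goal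
    have hkpos : (0:ℝ) < k := by
      have : 2 ≤ k := le_trans (by omega) hck
      exact_mod_cast Nat.pos_of_ne_zero (by omega)
    have hset_plus : (univ.filter fun m => P' m p = eplus)
        = (univ.filter fun m => P m p = eplus).erase m₀ := by
      ext m
      simp only [mem_filter, mem_erase, mem_univ, true_and]
      constructor
      · intro h
        have hm : m ≠ m₀ := by
          intro he; subst he; rw [hP'p] at h; exact hne h.symm
        refine ⟨hm, ?_⟩
        rw [hP'ne m hm] at h; exact h
      · rintro ⟨hm, h⟩
        rw [hP'ne m hm]; exact h
    have hcard_plus : (((univ.filter fun m => P' m p = eplus).card : ℕ) : ℝ)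
        = (c eplus : ℝ) - 1 := by
      rw [hset_plus, Finset.card_erase_of_mem hm₀mem, ← hc]
      rw [Nat.cast_sub (by omega)]
      norm_num
    have hset_minus : (univ.filter fun m => P' m p = eminus)
        = insert m₀ (univ.filter fun m => P m p = eminus) := by
      ext m
      simp only [mem_filter, mem_insert, mem_univ, true_and]
      constructor
      · intro h
        by_cases hm : m = m₀
        · exact Or.inl hm
        · right; rw [hP'ne m hm] at h; exact h
      · rintro (rfl | h)
        · exact hP'p
        · have hm : m ≠ m₀ := by
            intro he; subst he; rw [hm₀] at h; exact hne h
          rw [hP'ne m hm]; exact h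
    have hm₀notmem : m₀ ∉ (univ.filter fun m => P m p = eminus) := by
      simp only [mem_filter, mem_univ, true_and, hm₀]
      exact hne
    have hcard_minus : (((univ.filter fun m => P' m p = eminus).card : ℕ) : ℝ)
        = (c eminus : ℝ) + 1 := by
      rw [hset_minus, Finset.card_insert_of_notMem hm₀notmem, ← hc]
      push_cast; ring
    have hset_other : ∀ e, e ≠ eplus → e ≠ eminus →
        (univ.filter fun m => P' m p = e) = (univ.filter fun m => P m p = e) := by
      intro e he1 he2
      ext m
      simp only [mem_filter, mem_univ, true_and]
      by_cases hm : m = m₀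
      · subst hm
        rw [hP'p, hm₀]
        exact ⟨fun h => (he2 h.symm).elim, fun h => (he1 h.symm).elim⟩
      · rw [hP'ne m hm]
    have peel : ∀ G : α → ℝ,
        ∑ e : α, G e = G eplus + G eminus + ∑ e ∈ (univ.erase eplus).erase eminus, G e := by
      intro G
      rw [← Finset.add_sum_erase _ G (mem_univ eplus),
        ← Finset.add_sum_erase _ G (Finset.mem_erase.mpr ⟨Ne.symm hne, mem_univ eminus⟩)]
      ring
    have hstrict : ∑ e : α, Real.negMulLog (((univ.filter fun m => P m p = e).card : ℝ) / k)
        < ∑ e : α, Real.negMulLog (((univ.filter fun m => P' m p = e).card : ℝ) / k) := by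
      rw [peel, peel]
      have hrestEq : ∑ e ∈ (univ.erase eplus).erase eminus,
          Real.negMulLog (((univ.filter fun m => P' m p = e).card : ℝ) / k)
          = ∑ e ∈ (univ.erase eplus).erase eminus,
            Real.negMulLog (((univ.filter fun m => P m p = e).card : ℝ) / k) := by
        apply Finset.sum_congr rfl
        intro e he
        have h1 : e ≠ eminus := (Finset.mem_erase.mp he).1
        have h2 : e ≠ eplus := (Finset.mem_erase.mp (Finset.mem_erase.mp he).2).1
        rw [hset_other e h2 h1]
      rw [hrestEq]
      have key := negMulLog_step (a := (c eminus : ℝ)/k) (b := (c eplus : ℝ)/k) (d := 1/k)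
        (by positivity) (by positivity)
        (by
          have h1 : (c eminus : ℝ)/k + 2*(1/k) = ((c eminus : ℝ) + 2)/k := by ring
          rw [h1]
          apply (div_le_div_iff_of_pos_right hkpos).mpr
          exact_mod_cast hgap)
      have hcP : ∀ e, ((univ.filter fun m => P m p = e).card : ℝ) = (c e : ℝ) := by
        intro e; rw [hc]
      have e1 : ((c eminus : ℝ) + 1)/k = (c eminus : ℝ)/k + 1/k := by ring
      have e2 : ((c eplus : ℝ) - 1)/k = (c eplus : ℝ)/k - 1/k := by ring
      rw [hcP eplus, hcP eminus, hcard_plus, hcard_minus, e1, e2]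
      linarith [key]
    apply Finset.sum_lt_sum
    · intro q _
      by_cases hq : q = p
      · subst hq; exact le_of_lt hstrict
      · apply le_of_eq
        apply Finset.sum_congr rfl
        intro e _
        have hfix : (univ.filter fun m =>
              Function.update P m₀ (Function.update (P m₀) p eminus) m q = e)
            = univ.filter fun m => P m q = e := by
          apply Finset.filter_congr
          intro m _
          exact iff_of_eq (congrArg (· = e) (hP'q m q hq))
        rw [hfix]
    · exact ⟨p, mem_univ p, hstrict⟩
end
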